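/- Let M be a nonzero comultiplication R-module whose large sum graph Ǵ(M) is non-null, and let S₁, S₂ be two distinct minimal submodules of M. Then {S₁, S₂} is a dominating set of Ǵ(M); in particular the dominating number γ(Ǵ(M)) ≤ 2. -/

import Mathlib

/-- `M` is a comultiplication `R`-module: every submodule is of the form `(0 :_M I)`. -/
def IsComultiplication (R M : Type*) [CommRing R] [AddCommGroup M] [Module R M] : Prop :=
  ∀ N : Submodule R M, ∃ I : Ideal R, ∀ m : M, m ∈ N ↔ ∀ r ∈ I, r • m = 0

/-- A submodule is large (essential) if it meets every nonzero submodule nontrivially. -/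
def IsLarge {R M : Type*} [CommRing R] [AddCommGroup M] [Module R M]
    (N : Submodule R M) : Prop :=
  ∀ L : Submodule R M, L ≠ ⊥ → N ⊓ L ≠ ⊥

/-- The vertices of the large sum graph: nonzero non-large submodules. -/
abbrev LargeSumVtx (R M : Type*) [CommRing R] [AddCommGroup M] [Module R M] :=
  {N : Submodule R M // N ≠ ⊥ ∧ ¬ IsLarge N}

/-- The large sum graph: distinct nonzero non-large submodules `N, K` are adjacent
iff `N + K` is not large. -/
def largeSumGraph (R M : Type*) [CommRing R] [AddCommGroup M] [Module R M] :
    SimpleGraph (LargeSumVtx R M) where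
  Adj N K := N ≠ K ∧ ¬ IsLarge (N.1 ⊔ K.1)
  symm := ⟨fun a b ⟨h1, h2⟩ => ⟨h1.symm, by rwa [sup_comm]⟩⟩
  loopless := ⟨fun a h => h.1 rfl⟩

/-- If `S₁ ≠ S₂` are minimal submodules of a nonzero comultiplication module with non-null large
sum graph, then `{S₁, S₂}` is a dominating set: every vertex equals `S₁` or `S₂`, or is adjacent
to one of them. In particular the dominating number is at most `2`. -/
theorem stmt17 {R M : Type*} [CommRing R] [AddCommGroup M] [Module R M]
    [Nontrivial M] (hc : IsComultiplication R M)
    [Nonempty (LargeSumVtx R M)]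
    (S₁ S₂ : Submodule R M) (hS₁ : IsAtom S₁) (hS₂ : IsAtom S₂) (hne : S₁ ≠ S₂) :
    ∀ v : LargeSumVtx R M, v.1 = S₁ ∨ v.1 = S₂ ∨
      ¬ IsLarge (v.1 ⊔ S₁) ∨ ¬ IsLarge (v.1 ⊔ S₂) := by
  intro v
  by_cases hle1 : S₁ ≤ v.1
  · right; right; left
    rw [sup_eq_left.mpr hle1]
    exact v.2.2
  by_cases hle2 : S₂ ≤ v.1
  · right; right; right
    rw [sup_eq_left.mpr hle2]
    exact v.2.2
  -- now v ⊓ S₁ = ⊥ and v ⊓ S₂ = ⊥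
  have hv1 : v.1 ⊓ S₁ = ⊥ := by
    rcases lt_or_eq_of_le (inf_le_right : v.1 ⊓ S₁ ≤ S₁) with h | h
    · exact hS₁.2 _ h
    · exact absurd (h ▸ (inf_le_left : v.1 ⊓ S₁ ≤ v.1)) hle1
  have hv2 : v.1 ⊓ S₂ = ⊥ := by
    rcases lt_or_eq_of_le (inf_le_right : v.1 ⊓ S₂ ≤ S₂) with h | h
    · exact hS₂.2 _ h
    · exact absurd (h ▸ (inf_le_left : v.1 ⊓ S₂ ≤ v.1)) hle2
  by_cases hl : IsLarge (v.1 ⊔ S₁)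
  · -- derive a contradiction: S₂ = S₁
    exfalso
    have hS2le : S₂ ≤ v.1 ⊔ S₁ := by
      have h := hl S₂ hS₂.1
      rcases lt_or_eq_of_le (inf_le_right : (v.1 ⊔ S₁) ⊓ S₂ ≤ S₂) with hlt | heq
      · exact absurd (hS₂.2 _ hlt) h
      · exact inf_eq_right.mp heq
    -- get the comultiplication presentation of S₂
    obtain ⟨I₂, hI₂⟩ := hc S₂
    have hS2S1 : S₂ ≤ S₁ := by
      intro s hs
      obtain ⟨n, hn, t, ht, hnt⟩ := Submodule.mem_sup.mp (hS2le hs)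
      have hn0 : n = 0 := by
        have hnS2 : n ∈ S₂ := by
          rw [hI₂]
          intro r hr
          have h1 : r • n = -(r • t) := by
            have h2 : r • n + r • t = 0 := by
              rw [← smul_add, hnt, (hI₂ s).mp hs r hr]
            exact eq_neg_of_add_eq_zero_left h2
          have hmem : r • n ∈ v.1 ⊓ S₁ := by
            constructor
            · exact Submodule.smul_mem _ _ hn
            · rw [h1]; exact neg_mem (Submodule.smul_mem _ _ ht)
          rw [hv1] at hmem
          exact hmem
        have : n ∈ v.1 ⊓ S₂ := ⟨hn, hnS2⟩
        rw [hv2] at this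
        exact this
      rw [hn0, zero_add] at hnt
      rw [← hnt]; exact ht
    rcases lt_or_eq_of_le hS2S1 with hlt | heq
    · exact hS₂.1 (hS₁.2 _ hlt)
    · exact hne heq.symm
  · exact Or.inr (Or.inr (Or.inl hl))
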